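/- A unitary operator U on ℂ^n ⊗ ℂ^k is block-diagonal with respect to both tensor factors (U ∈ U^A_block-diag ∩ U^B_block-diag) if and only if U = Σ_{i=1}^s Σ_{j=1}^r λ_{ij} Q_i ⊗ R_j, where |λ_{ij}| = 1 for all i, j, and (Q_i)_{i=1}^s, (R_j)_{j=1}^r are families of partial isometries on ℂ^n and ℂ^k respectively satisfying Σ_{i=1}^s Q_iQ_i* = Σ_{i=1}^s Q_i*Q_i = I_n and Σ_{j=1}^r R_jR_j* = Σ_{j=1}^r R_j*R_j = I_k. -/

import Mathlib

open Matrix Kronecker ComplexOrder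

noncomputable section

namespace BipartiteUnitary

/-- A square complex matrix is unitary. -/
def IsUnitary {m : Type*} [Fintype m] [DecidableEq m] (U : Matrix m m ℂ) : Prop :=
  U * Uᴴ = 1 ∧ Uᴴ * U = 1

/-- A density matrix: positive semidefinite with unit trace. -/
def IsDensity {m : Type*} [Fintype m] (β : Matrix m m ℂ) : Prop :=
  β.PosSemidef ∧ β.trace = 1

/-- Partial trace over the second tensor factor. -/
def trB {n k : Type*} [Fintype k] (M : Matrix (n × k) (n × k) ℂ) : Matrix n n ℂ :=
  fun i j => ∑ s, M (i, s) (j, s)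

/-- Partial trace over the first tensor factor. -/
def trA {n k : Type*} [Fintype n] (M : Matrix (n × k) (n × k) ℂ) : Matrix k k ℂ :=
  fun s t => ∑ i, M (i, s) (i, t)

/-- The quantum channel `L_{U,β}(X) = Tr_B (U (X ⊗ β) U*)`. -/
def channel {n k : Type*} [Fintype n] [Fintype k]
    (U : Matrix (n × k) (n × k) ℂ) (β : Matrix k k ℂ) (X : Matrix n n ℂ) :
    Matrix n n ℂ :=
  trB (U * (X ⊗ₖ β) * Uᴴ)

/-- The partial transpose `X^Γ = (id ⊗ t)(X)` with respect to the second factor. -/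
def pt {n k : Type*} (U : Matrix (n × k) (n × k) ℂ) : Matrix (n × k) (n × k) ℂ :=
  fun p q => U (p.1, q.2) (q.1, p.2)

/-- A family of vectors forming an orthonormal basis of `ℂ^k`. -/
def ONB {k : Type*} [Fintype k] [DecidableEq k] (e : k → k → ℂ) : Prop :=
  ∀ i j, (∑ s, star (e i s) * e j s) = if i = j then (1 : ℂ) else 0

/-- A partial isometry. -/
def IsPartialIso {m : Type*} [Fintype m] [DecidableEq m] (R : Matrix m m ℂ) : Prop :=
  R * Rᴴ * R = R

/-- Membership in `𝒰^A_{block-diag}`: `U = ∑ i, U_i ⊗ e_i f_i*` with `U_i` unitary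
and `{e_i}, {f_i}` orthonormal bases of `ℂ^k`. -/
def memUA {n k : ℕ} (U : Matrix (Fin n × Fin k) (Fin n × Fin k) ℂ) : Prop :=
  ∃ (Us : Fin k → Matrix (Fin n) (Fin n) ℂ) (e f : Fin k → Fin k → ℂ),
    (∀ i, IsUnitary (Us i)) ∧ ONB e ∧ ONB f ∧
    U = ∑ i, Us i ⊗ₖ vecMulVec (e i) (star (f i))

/-- Membership in `ℳ^A_{block-diag}`: `X = ∑ i, X_i ⊗ e_i f_i*` with arbitrary `X_i`. -/
def memMA {n k : ℕ} (X : Matrix (Fin n × Fin k) (Fin n × Fin k) ℂ) : Prop :=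
  ∃ (Xs : Fin k → Matrix (Fin n) (Fin n) ℂ) (e f : Fin k → Fin k → ℂ),
    ONB e ∧ ONB f ∧ X = ∑ i, Xs i ⊗ₖ vecMulVec (e i) (star (f i))

/-- Membership in `𝒰^B_{block-diag}`. -/
def memUB {n k : ℕ} (U : Matrix (Fin n × Fin k) (Fin n × Fin k) ℂ) : Prop :=
  ∃ (Us : Fin n → Matrix (Fin k) (Fin k) ℂ) (e f : Fin n → Fin n → ℂ),
    (∀ i, IsUnitary (Us i)) ∧ ONB e ∧ ONB f ∧
    U = ∑ i, vecMulVec (e i) (star (f i)) ⊗ₖ Us i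

/-- Membership in `ℳ^B_{block-diag}`. -/
def memMB {n k : ℕ} (X : Matrix (Fin n × Fin k) (Fin n × Fin k) ℂ) : Prop :=
  ∃ (Xs : Fin n → Matrix (Fin k) (Fin k) ℂ) (e f : Fin n → Fin n → ℂ),
    ONB e ∧ ONB f ∧ X = ∑ i, vecMulVec (e i) (star (f i)) ⊗ₖ Xs i


lemma ONB.complete {k : ℕ} {g : Fin k → Fin k → ℂ} (hg : ONB g) (a b : Fin k) :
    (∑ i, g i a * star (g i b)) = if a = b then 1 else 0 := by
  classical
  set M : Matrix (Fin k) (Fin k) ℂ := Matrix.of fun i s => star (g i s) with hM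
  have h1 : M * Mᴴ = 1 := by
    ext i j
    simp only [Matrix.mul_apply, Matrix.conjTranspose_apply, hM, Matrix.of_apply,
      Matrix.one_apply, star_star]
    exact hg i j
  have h2 : Mᴴ * M = 1 := mul_eq_one_comm.mp h1
  have := Matrix.ext_iff.mpr h2 a b
  simp only [Matrix.mul_apply, Matrix.conjTranspose_apply, hM, Matrix.of_apply,
    Matrix.one_apply, star_star] at this
  calc (∑ i, g i a * star (g i b)) = ∑ i, g i a * star (g i b) := rfl
    _ = if a = b then 1 else 0 := this

lemma vecMulVec_conjT {m : Type*} [Fintype m] (v w : m → ℂ) :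
    (vecMulVec v (star w))ᴴ = vecMulVec w (star v) := by
  ext i j
  simp [vecMulVec_apply, mul_comm]

lemma vecMulVec_mul_vecMulVec {m : Type*} [Fintype m] (a b c d : m → ℂ) :
    vecMulVec a b * vecMulVec c d = (b ⬝ᵥ c) • vecMulVec a d := by
  ext i j
  simp only [Matrix.mul_apply, vecMulVec_apply, Matrix.smul_apply, dotProduct, smul_eq_mul,
    Finset.sum_mul, Finset.mul_sum]
  congr 1; ext s; ring


lemma ONB.dot {k : ℕ} {g : Fin k → Fin k → ℂ} (hg : ONB g) (i j : Fin k) :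
    star (g i) ⬝ᵥ g j = if i = j then (1:ℂ) else 0 := by
  simpa [dotProduct] using hg i j

-- trace positivity helpers
lemma trace_cms_nonneg {m : Type*} [Fintype m] (A : Matrix m m ℂ) : 0 ≤ (Aᴴ * A).trace := by
  rw [Matrix.trace]
  refine Finset.sum_nonneg fun j _ => ?_
  simp only [Matrix.diag_apply, Matrix.mul_apply, Matrix.conjTranspose_apply]
  exact Finset.sum_nonneg fun a _ => star_mul_self_nonneg _

lemma trace_cms_eq_zero {m : Type*} [Fintype m] {A : Matrix m m ℂ}
    (h : (Aᴴ * A).trace = 0) : A = 0 := by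
  rw [Matrix.trace] at h
  have hz := (Finset.sum_eq_zero_iff_of_nonneg (fun j _ => ?nn)).mp h
  case nn =>
    simp only [Matrix.diag_apply, Matrix.mul_apply, Matrix.conjTranspose_apply]
    exact Finset.sum_nonneg fun a _ => star_mul_self_nonneg _
  ext a j
  have := hz j (Finset.mem_univ j)
  simp only [Matrix.diag_apply, Matrix.mul_apply, Matrix.conjTranspose_apply] at this
  have h2 := (Finset.sum_eq_zero_iff_of_nonneg (fun a _ => star_mul_self_nonneg (A a j))).mp this
  have := h2 a (Finset.mem_univ a)
  have hns : star (A a j) * A a j = (Complex.normSq (A a j) : ℂ) := by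
    simp [Complex.normSq_eq_conj_mul_self]
  rw [hns] at this
  have : Complex.normSq (A a j) = 0 := by exact_mod_cast this
  simpa using Complex.normSq_eq_zero.mp this


lemma proj_orth {m : Type*} [Fintype m] [DecidableEq m] {r : ℕ}
    {P : Fin r → Matrix m m ℂ}
    (hH : ∀ j, (P j)ᴴ = P j) (hI : ∀ j, P j * P j = P j)
    (hsum : ∑ j, P j = 1) {i j : Fin r} (hij : i ≠ j) : P i * P j = 0 := by
  classical
  have key : ∑ j' ∈ Finset.univ.erase i, P i * P j' * P i = 0 := by
    have h0 : ∑ j' ∈ Finset.univ.erase i, P i * P j' * P i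
        = P i * (∑ j' ∈ Finset.univ.erase i, P j') * P i := by
      rw [Finset.mul_sum, Finset.sum_mul]
    rw [h0]
    have he : ∑ j' ∈ Finset.univ.erase i, P j' = 1 - P i := by
      have h1 := Finset.add_sum_erase Finset.univ P (Finset.mem_univ i)
      rw [hsum] at h1
      rw [eq_sub_iff_add_eq, add_comm]
      exact h1
    rw [he]
    simp [Matrix.mul_sub, Matrix.sub_mul, Matrix.mul_assoc, hI]
  have hterm : ∀ j' ∈ Finset.univ.erase i, P i * P j' * P i = (P j' * P i)ᴴ * (P j' * P i) := by
    intro j' _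
    rw [Matrix.conjTranspose_mul, hH, hH]
    conv_rhs => rw [Matrix.mul_assoc, ← Matrix.mul_assoc (P j') (P j') (P i), hI j']
    rw [Matrix.mul_assoc]
  have htr : ∑ j' ∈ Finset.univ.erase i, ((P j' * P i)ᴴ * (P j' * P i)).trace = 0 := by
    rw [← Matrix.trace_sum, ← Finset.sum_congr rfl hterm, key, Matrix.trace_zero]
  have hz := (Finset.sum_eq_zero_iff_of_nonneg
    (fun j' _ => trace_cms_nonneg (P j' * P i))).mp htr
  have hji : P j * P i = 0 :=
    trace_cms_eq_zero (hz j (Finset.mem_erase.mpr ⟨fun h => hij h.symm, Finset.mem_univ j⟩))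
  have h2 := congrArg Matrix.conjTranspose hji
  rwa [Matrix.conjTranspose_mul, hH, hH, Matrix.conjTranspose_zero] at h2

lemma pi_orth {m : Type*} [Fintype m] [DecidableEq m] {r : ℕ}
    {R : Fin r → Matrix m m ℂ} (hpi : ∀ j, IsPartialIso (R j))
    (h1 : ∑ j, R j * (R j)ᴴ = 1) (h2 : ∑ j, (R j)ᴴ * R j = 1) :
    (∀ i j, i ≠ j → (R i)ᴴ * R j = 0) ∧ (∀ i j, i ≠ j → R i * (R j)ᴴ = 0) := by
  have hstar : ∀ j, (R j)ᴴ * (R j * (R j)ᴴ) = (R j)ᴴ := by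
    intro j
    have := congrArg Matrix.conjTranspose (hpi j)
    simpa [Matrix.conjTranspose_mul, Matrix.mul_assoc] using this
  have hself : ∀ j, R j * ((R j)ᴴ * R j) = R j := by
    intro j; rw [← Matrix.mul_assoc]; exact hpi j
  have hPo : ∀ i j, i ≠ j → (R i * (R i)ᴴ) * (R j * (R j)ᴴ) = 0 := by
    intro i j hij
    refine proj_orth (fun j => by simp [Matrix.conjTranspose_mul]) (fun j => ?_) h1 hij
    calc R j * (R j)ᴴ * (R j * (R j)ᴴ) = R j * ((R j)ᴴ * (R j * (R j)ᴴ)) := by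
          rw [Matrix.mul_assoc]
      _ = R j * (R j)ᴴ := by rw [hstar j]
  have hQo : ∀ i j, i ≠ j → ((R i)ᴴ * R i) * ((R j)ᴴ * R j) = 0 := by
    intro i j hij
    refine proj_orth (fun j => by simp [Matrix.conjTranspose_mul]) (fun j => ?_) h2 hij
    calc (R j)ᴴ * R j * ((R j)ᴴ * R j) = (R j)ᴴ * (R j * ((R j)ᴴ * R j)) := by
          rw [Matrix.mul_assoc]
      _ = (R j)ᴴ * R j := by rw [hself j]
  constructor
  · intro i j hij
    calc (R i)ᴴ * R j = ((R i)ᴴ * (R i * (R i)ᴴ)) * ((R j * (R j)ᴴ) * R j) := by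
          rw [hstar i, hpi j]
      _ = (R i)ᴴ * ((R i * (R i)ᴴ) * (R j * (R j)ᴴ)) * R j := by
          simp only [Matrix.mul_assoc]
      _ = 0 := by rw [hPo i j hij]; simp
  · intro i j hij
    have hstar2 : ∀ j, ((R j)ᴴ * R j) * (R j)ᴴ = (R j)ᴴ := by
      intro j; rw [Matrix.mul_assoc]; exact hstar j
    calc R i * (R j)ᴴ = (R i * ((R i)ᴴ * R i)) * (((R j)ᴴ * R j) * (R j)ᴴ) := by
          rw [hself i, hstar2 j]
      _ = R i * (((R i)ᴴ * R i) * ((R j)ᴴ * R j)) * (R j)ᴴ := by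
          simp only [Matrix.mul_assoc]
      _ = 0 := by rw [hQo i j hij]; simp


lemma sum_mulVec' {m p : Type*} [Fintype m] [Fintype p] {r : ℕ}
    (A : Fin r → Matrix p m ℂ) (w : m → ℂ) : (∑ j, A j) *ᵥ w = ∑ j, A j *ᵥ w := by
  ext s
  simp only [Matrix.mulVec, dotProduct, Matrix.sum_apply, Finset.sum_apply,
    Finset.sum_mul]
  rw [Finset.sum_comm]

lemma partialIso_family_decomp {k r : ℕ} (R : Fin r → Matrix (Fin k) (Fin k) ℂ)
    (hpi : ∀ j, IsPartialIso (R j))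
    (h1 : ∑ j, R j * (R j)ᴴ = 1) (h2 : ∑ j, (R j)ᴴ * R j = 1) :
    ∃ (jm : Fin k → Fin r) (e f : Fin k → Fin k → ℂ), ONB e ∧ ONB f ∧
      ∀ j, R j = ∑ t, if jm t = j then vecMulVec (e t) (star (f t)) else 0 := by
  classical
  obtain ⟨hoT, hoP⟩ := pi_orth hpi h1 h2
  set P : Fin r → Matrix (Fin k) (Fin k) ℂ := fun j => R j * (R j)ᴴ with hPdef
  have hPH : ∀ j, (P j)ᴴ = P j := fun j => by simp [hPdef, Matrix.conjTranspose_mul]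
  have hPo : ∀ i j, i ≠ j → P i * P j = 0 := by
    intro i j hij
    calc P i * P j = R i * ((R i)ᴴ * R j) * (R j)ᴴ := by simp [hPdef, Matrix.mul_assoc]
      _ = 0 := by rw [hoT i j hij]; simp
  set H : Matrix (Fin k) (Fin k) ℂ := ∑ j : Fin r, (((j : ℕ) + 1 : ℂ)) • P j with hHdef
  have hH : H.IsHermitian := by
    show Hᴴ = H
    rw [hHdef, Matrix.conjTranspose_sum]
    refine Finset.sum_congr rfl fun j _ => ?_
    rw [Matrix.conjTranspose_smul, hPH]
    congr 1
    simp
  set v : Fin k → Fin k → ℂ := fun t => ⇑(hH.eigenvectorBasis t) with hvdef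
  have hONBv : ONB v := by
    intro i j
    have := orthonormal_iff_ite.mp (hH.eigenvectorBasis).orthonormal i j
    rw [← this]
    simp [hvdef, PiLp.inner_apply, RCLike.inner_apply]
    exact Finset.sum_congr rfl fun x _ => mul_comm _ _
  have heig : ∀ t, H *ᵥ v t = ((hH.eigenvalues t : ℝ) : ℂ) • v t := by
    intro t
    rw [hvdef, hH.mulVec_eigenvectorBasis]
    ext s
    simp [Complex.real_smul]
  have hPmulH : ∀ j, P j * H = (((j : ℕ) + 1 : ℂ)) • P j := by
    intro j
    rw [hHdef, Finset.mul_sum]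
    rw [Finset.sum_eq_single j]
    · rw [Matrix.mul_smul]
      congr 1
      calc P j * P j = R j * (R j)ᴴ * R j * (R j)ᴴ := by simp [hPdef, Matrix.mul_assoc]
        _ = P j := by rw [hpi j]
    · intro b _ hbj
      rw [Matrix.mul_smul, hPo j b (Ne.symm hbj), smul_zero]
    · intro h; exact absurd (Finset.mem_univ j) h
  have hPsum : ∑ j, P j = 1 := h1
  -- eigenvector vanishing
  have hvanish : ∀ (t : Fin k) (j' : Fin r), ((hH.eigenvalues t : ℝ) : ℂ) ≠ ((j' : ℕ) + 1 : ℂ) →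
      P j' *ᵥ v t = 0 := by
    intro t j' hne
    have e1 : P j' *ᵥ (H *ᵥ v t) = (((j' : ℕ) + 1 : ℂ)) • (P j' *ᵥ v t) := by
      rw [Matrix.mulVec_mulVec, hPmulH, Matrix.smul_mulVec]
    have e2 : P j' *ᵥ (H *ᵥ v t) = ((hH.eigenvalues t : ℝ) : ℂ) • (P j' *ᵥ v t) := by
      rw [heig t, Matrix.mulVec_smul]
    have e3 : ((((j' : ℕ) + 1 : ℂ)) - ((hH.eigenvalues t : ℝ) : ℂ)) • (P j' *ᵥ v t) = 0 := by
      rw [sub_smul, ← e1, ← e2, sub_self]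
    rcases smul_eq_zero.mp e3 with h | h
    · exact absurd (sub_eq_zero.mp h).symm hne
    · exact h
  have hvne : ∀ t, v t ≠ 0 := by
    intro t hv0
    have := hONBv t t
    simp [hv0] at this
  have hEx : ∀ t, ∃ j, ∀ j', j' ≠ j → P j' *ᵥ v t = 0 := by
    intro t
    by_cases hc : ∃ j0 : Fin r, (hH.eigenvalues t : ℝ) = ((j0 : ℕ) + 1 : ℝ)
    · obtain ⟨j0, hj0⟩ := hc
      refine ⟨j0, fun j' hne => hvanish t j' ?_⟩
      rw [show ((hH.eigenvalues t : ℝ) : ℂ) = (((j0 : ℕ) + 1 : ℝ) : ℂ) from by rw [hj0]]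
      push_cast
      intro hcontra
      have : ((j0 : ℕ) : ℂ) = ((j' : ℕ) : ℂ) := by linear_combination hcontra
      have h2 : (j0 : ℕ) = (j' : ℕ) := Nat.cast_inj.mp this
      exact hne (Fin.val_injective h2.symm)
    · push_neg at hc
      exfalso
      apply hvne t
      have : ∀ j', P j' *ᵥ v t = 0 := by
        intro j'
        refine hvanish t j' ?_
        intro hcontra
        apply hc j'
        have : ((hH.eigenvalues t : ℝ) : ℂ) = ((((j' : ℕ) + 1 : ℝ)) : ℂ) := by
          rw [hcontra]; push_cast; ring
        exact_mod_cast this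
      calc v t = (∑ j, P j) *ᵥ v t := by rw [hPsum, Matrix.one_mulVec]
        _ = ∑ j, P j *ᵥ v t := by rw [sum_mulVec']
        _ = 0 := by simp [this]
  set jm : Fin k → Fin r := fun t => Classical.choose (hEx t) with hjmdef
  have hjm : ∀ t j', j' ≠ jm t → P j' *ᵥ v t = 0 := fun t => Classical.choose_spec (hEx t)
  have hPv : ∀ t, P (jm t) *ᵥ v t = v t := by
    intro t
    calc P (jm t) *ᵥ v t = ∑ j, P j *ᵥ v t := by
          rw [Finset.sum_eq_single (jm t)]
          · intro b _ hb; exact hjm t b hb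
          · intro h; exact absurd (Finset.mem_univ _) h
      _ = (∑ j, P j) *ᵥ v t := by rw [sum_mulVec']
      _ = v t := by rw [hPsum, Matrix.one_mulVec]
  set f : Fin k → Fin k → ℂ := fun t => (R (jm t))ᴴ *ᵥ v t with hfdef
  -- key: star (f t) = star (v t) ᵥ* R (jm t)
  have hstarf : ∀ t, star (f t) = star (v t) ᵥ* R (jm t) := by
    intro t
    rw [hfdef]
    simp only [Matrix.star_mulVec, Matrix.conjTranspose_conjTranspose]
  have hRv0 : ∀ t j, jm t ≠ j → star (v t) ᵥ* R j = 0 := by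
    intro t j hne
    have : (R j)ᴴ *ᵥ v t = 0 := by
      calc (R j)ᴴ *ᵥ v t = (R j)ᴴ *ᵥ (P (jm t) *ᵥ v t) := by rw [hPv t]
        _ = ((R j)ᴴ * P (jm t)) *ᵥ v t := by rw [Matrix.mulVec_mulVec]
        _ = (((R j)ᴴ * R (jm t)) * (R (jm t))ᴴ) *ᵥ v t := by
            rw [hPdef]; simp [Matrix.mul_assoc]
        _ = 0 := by rw [hoT j (jm t) (Ne.symm hne)]; simp
    have hst := congrArg star this
    rw [Matrix.star_mulVec, Matrix.conjTranspose_conjTranspose] at hst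
    simpa using hst
  have hEmul : ∀ t (B : Matrix (Fin k) (Fin k) ℂ),
      vecMulVec (v t) (star (v t)) * B = vecMulVec (v t) (star (v t) ᵥ* B) := by
    intro t B
    ext a b
    simp only [Matrix.mul_apply, vecMulVec_apply, Matrix.vecMul, dotProduct,
      Pi.star_apply, Finset.mul_sum]
    congr 1; ext m; ring
  have hONBf : ONB f := by
    intro i j
    have lhs_eq : (∑ s, star (f i s) * f j s) = star (f i) ⬝ᵥ f j := rfl
    rw [lhs_eq]
    have : star (f i) ⬝ᵥ f j = star (v i) ⬝ᵥ ((R (jm i) * (R (jm j))ᴴ) *ᵥ v j) := by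
      rw [hstarf i, hfdef]
      rw [← Matrix.mulVec_mulVec]
      rw [← Matrix.dotProduct_mulVec]
    rw [this]
    by_cases hc : jm i = jm j
    · rw [hc]
      have : (R (jm j) * (R (jm j))ᴴ) *ᵥ v j = v j := hPv j
      rw [this]
      exact hONBv i j
    · have h0 : R (jm i) * (R (jm j))ᴴ = 0 := hoP (jm i) (jm j) hc
      rw [h0, Matrix.zero_mulVec, dotProduct_zero]
      have : i ≠ j := fun h => hc (by rw [h])
      simp [this]
  refine ⟨jm, v, f, hONBv, hONBf, fun j => ?_⟩
  have hsumE : ∑ t, vecMulVec (v t) (star (v t)) = 1 := by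
    ext a b
    simp only [Finset.sum_apply, vecMulVec_apply, Pi.star_apply, Matrix.one_apply,
      Matrix.sum_apply]
    exact hONBv.complete a b
  calc R j = (∑ t, vecMulVec (v t) (star (v t))) * R j := by rw [hsumE, Matrix.one_mul]
    _ = ∑ t, vecMulVec (v t) (star (v t)) * R j := by rw [Finset.sum_mul]
    _ = ∑ t, if jm t = j then vecMulVec (v t) (star (f t)) else 0 := by
        refine Finset.sum_congr rfl fun t _ => ?_
        by_cases hc : jm t = j
        · rw [if_pos hc, hEmul, ← hc, ← hstarf]
        · rw [if_neg hc, hEmul, hRv0 t j hc]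
          ext a b
          simp [vecMulVec_apply]

lemma kronecker_sum_right {a b c d : Type*} [Fintype c] [Fintype d] {r : ℕ}
    (A : Matrix a b ℂ) (B : Fin r → Matrix c d ℂ) :
    A ⊗ₖ (∑ t, B t) = ∑ t, A ⊗ₖ B t := by
  ext ⟨i,s⟩ ⟨j,u⟩
  simp [Matrix.kroneckerMap_apply, Matrix.sum_apply, Finset.mul_sum]

lemma sum_kronecker_left {a b c d : Type*} [Fintype a] [Fintype b] {r : ℕ}
    (A : Fin r → Matrix a b ℂ) (B : Matrix c d ℂ) :
    (∑ t, A t) ⊗ₖ B = ∑ t, A t ⊗ₖ B := by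
  ext ⟨i,s⟩ ⟨j,u⟩
  simp [Matrix.kroneckerMap_apply, Matrix.sum_apply, Finset.sum_mul]

lemma exists_memUA {n k r : ℕ} (M : Fin r → Matrix (Fin n) (Fin n) ℂ)
    (R : Fin r → Matrix (Fin k) (Fin k) ℂ)
    (hM : ∀ j, IsUnitary (M j)) (hpi : ∀ j, IsPartialIso (R j))
    (h1 : ∑ j, R j * (R j)ᴴ = 1) (h2 : ∑ j, (R j)ᴴ * R j = 1) :
    memUA (∑ j, M j ⊗ₖ R j) := by
  classical
  obtain ⟨jm, e, f, he, hf, hdec⟩ := partialIso_family_decomp R hpi h1 h2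
  refine ⟨fun t => M (jm t), e, f, fun t => hM (jm t), he, hf, ?_⟩
  calc ∑ j, M j ⊗ₖ R j
      = ∑ j, ∑ t, (if jm t = j then M j ⊗ₖ vecMulVec (e t) (star (f t)) else 0) := by
        refine Finset.sum_congr rfl fun j _ => ?_
        rw [hdec j, kronecker_sum_right]
        refine Finset.sum_congr rfl fun t _ => ?_
        split
        · rfl
        · exact Matrix.kronecker_zero _
    _ = ∑ t, ∑ j, (if jm t = j then M j ⊗ₖ vecMulVec (e t) (star (f t)) else 0) :=
        Finset.sum_comm
    _ = ∑ t, M (jm t) ⊗ₖ vecMulVec (e t) (star (f t)) := by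
        refine Finset.sum_congr rfl fun t _ => ?_
        rw [Finset.sum_ite_eq]
        simp

lemma exists_memUB {n k r : ℕ} (Q : Fin r → Matrix (Fin n) (Fin n) ℂ)
    (N : Fin r → Matrix (Fin k) (Fin k) ℂ)
    (hN : ∀ j, IsUnitary (N j)) (hpi : ∀ j, IsPartialIso (Q j))
    (h1 : ∑ j, Q j * (Q j)ᴴ = 1) (h2 : ∑ j, (Q j)ᴴ * Q j = 1) :
    memUB (∑ j, Q j ⊗ₖ N j) := by
  classical
  obtain ⟨jm, e, f, he, hf, hdec⟩ := partialIso_family_decomp Q hpi h1 h2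
  refine ⟨fun t => N (jm t), e, f, fun t => hN (jm t), he, hf, ?_⟩
  calc ∑ j, Q j ⊗ₖ N j
      = ∑ j, ∑ t, (if jm t = j then vecMulVec (e t) (star (f t)) ⊗ₖ N j else 0) := by
        refine Finset.sum_congr rfl fun j _ => ?_
        rw [hdec j, sum_kronecker_left]
        refine Finset.sum_congr rfl fun t _ => ?_
        split
        · rfl
        · exact Matrix.zero_kronecker _
    _ = ∑ t, ∑ j, (if jm t = j then vecMulVec (e t) (star (f t)) ⊗ₖ N j else 0) :=
        Finset.sum_comm
    _ = ∑ t, vecMulVec (e t) (star (f t)) ⊗ₖ N (jm t) := by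
        refine Finset.sum_congr rfl fun t _ => ?_
        rw [Finset.sum_ite_eq]
        simp

lemma unitary_comb {m : Type*} [Fintype m] [DecidableEq m] {r : ℕ}
    (lam : Fin r → ℂ) (hl : ∀ i, ‖lam i‖ = 1) (Q : Fin r → Matrix m m ℂ)
    (hpi : ∀ i, IsPartialIso (Q i))
    (h1 : ∑ i, Q i * (Q i)ᴴ = 1) (h2 : ∑ i, (Q i)ᴴ * Q i = 1) :
    IsUnitary (∑ i, lam i • Q i) := by
  classical
  obtain ⟨hoT, hoP⟩ := pi_orth hpi h1 h2
  have hml : ∀ i, lam i * star (lam i) = 1 := by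
    intro i
    have : lam i * star (lam i) = (Complex.normSq (lam i) : ℂ) := by
      rw [mul_comm]
      simp [Complex.normSq_eq_conj_mul_self]
    rw [this, Complex.normSq_eq_norm_sq]
    rw [hl i]
    norm_num
  have hct : (∑ i, lam i • Q i)ᴴ = ∑ i, star (lam i) • (Q i)ᴴ := by
    rw [Matrix.conjTranspose_sum]
    exact Finset.sum_congr rfl fun i _ => Matrix.conjTranspose_smul _ _
  constructor
  · rw [hct, Finset.sum_mul]
    have : ∀ i, (lam i • Q i) * (∑ i', star (lam i') • (Q i')ᴴ) = Q i * (Q i)ᴴ := by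
      intro i
      rw [Finset.mul_sum, Finset.sum_eq_single i]
      · rw [Matrix.smul_mul, Matrix.mul_smul, smul_smul, hml i, one_smul]
      · intro b _ hbi
        rw [Matrix.smul_mul, Matrix.mul_smul, smul_smul, hoP i b (Ne.symm hbi)]
        · simp
      · intro h; exact absurd (Finset.mem_univ i) h
    rw [Finset.sum_congr rfl fun i _ => this i]
    exact h1
  · rw [hct, Finset.sum_mul]
    have : ∀ i, (star (lam i) • (Q i)ᴴ) * (∑ i', lam i' • Q i') = (Q i)ᴴ * Q i := by
      intro i
      rw [Finset.mul_sum, Finset.sum_eq_single i]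
      · rw [Matrix.smul_mul, Matrix.mul_smul, smul_smul]
        rw [mul_comm, hml i, one_smul]
      · intro b _ hbi
        rw [Matrix.smul_mul, Matrix.mul_smul, smul_smul, hoT i b (Ne.symm hbi)]
        · simp
      · intro h; exact absurd (Finset.mem_univ i) h
    rw [Finset.sum_congr rfl fun i _ => this i]
    exact h2

lemma reverse_dir {n k : ℕ} {s r : ℕ} (lam : Fin s → Fin r → ℂ)
    (Q : Fin s → Matrix (Fin n) (Fin n) ℂ) (R : Fin r → Matrix (Fin k) (Fin k) ℂ)
    (hlam : ∀ i j, ‖lam i j‖ = 1)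
    (hQ : ∀ i, IsPartialIso (Q i)) (hR : ∀ j, IsPartialIso (R j))
    (hQ1 : (∑ i, Q i * (Q i)ᴴ) = 1) (hQ2 : (∑ i, (Q i)ᴴ * Q i) = 1)
    (hR1 : (∑ j, R j * (R j)ᴴ) = 1) (hR2 : (∑ j, (R j)ᴴ * R j) = 1) :
    memUA (n := n) (k := k) (∑ i, ∑ j, lam i j • (Q i ⊗ₖ R j)) ∧
    memUB (n := n) (k := k) (∑ i, ∑ j, lam i j • (Q i ⊗ₖ R j)) := by
  constructor
  · have heq : (∑ i, ∑ j, lam i j • (Q i ⊗ₖ R j))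
        = ∑ j, (∑ i, lam i j • Q i) ⊗ₖ R j := by
      rw [Finset.sum_comm]
      refine Finset.sum_congr rfl fun j _ => ?_
      rw [sum_kronecker_left]
      refine Finset.sum_congr rfl fun i _ => ?_
      rw [Matrix.smul_kronecker]
    rw [heq]
    exact exists_memUA _ _ (fun j => unitary_comb _ (fun i => hlam i j) Q hQ hQ1 hQ2)
      hR hR1 hR2
  · have heq : (∑ i, ∑ j, lam i j • (Q i ⊗ₖ R j))
        = ∑ i, Q i ⊗ₖ (∑ j, lam i j • R j) := by
      refine Finset.sum_congr rfl fun i _ => ?_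
      rw [kronecker_sum_right]
      refine Finset.sum_congr rfl fun j _ => ?_
      rw [Matrix.kronecker_smul]
    rw [heq]
    exact exists_memUB _ _ (fun i => unitary_comb _ (fun j => hlam i j) R hR hR1 hR2)
      hQ hQ1 hQ2

lemma collapse {k : ℕ} {e f : Fin k → Fin k → ℂ} (he : ONB e) (hf : ONB f)
    (X : Fin k → ℂ) (j : Fin k) :
    ∑ s, ∑ t, star (e j s) * ((∑ j', X j' * (e j' s * star (f j' t))) * f j t) = X j := by
  calc ∑ s, ∑ t, star (e j s) * ((∑ j', X j' * (e j' s * star (f j' t))) * f j t)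
      = ∑ s, ∑ j', ∑ t, star (e j s) * (X j' * (e j' s * star (f j' t)) * f j t) := by
        refine Finset.sum_congr rfl fun s _ => ?_
        simp only [Finset.sum_mul, Finset.mul_sum]
        rw [Finset.sum_comm]
    _ = ∑ j', ∑ s, ∑ t, star (e j s) * (X j' * (e j' s * star (f j' t)) * f j t) :=
        Finset.sum_comm
    _ = ∑ j', X j' * ((∑ s, star (e j s) * e j' s) * (∑ t, star (f j' t) * f j t)) := by
        refine Finset.sum_congr rfl fun j' _ => ?_
        simp only [Finset.mul_sum, Finset.sum_mul]
        rw [Finset.sum_comm]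
        exact Finset.sum_congr rfl fun u _ => Finset.sum_congr rfl fun t _ => by ring
    _ = ∑ j', X j' * ((if j = j' then (1:ℂ) else 0) * (if j' = j then (1:ℂ) else 0)) := by
        refine Finset.sum_congr rfl fun j' _ => ?_
        rw [he j j', hf j' j]
    _ = X j := by
        rw [Finset.sum_eq_single j]
        · simp
        · intro b _ hbj
          simp [hbj, Ne.symm hbj]
        · intro habs; exact absurd (Finset.mem_univ j) habs

lemma collapse2 {k n : ℕ} (e f : Fin k → Fin k → ℂ) (V : Fin n → Matrix (Fin k) (Fin k) ℂ)
    (Y : Fin n → ℂ) (j : Fin k) :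
    ∑ s, ∑ t, star (e j s) * ((∑ i, Y i * V i s t) * f j t)
      = ∑ i, Y i * (∑ s, ∑ t, star (e j s) * (V i s t * f j t)) := by
  calc ∑ s, ∑ t, star (e j s) * ((∑ i, Y i * V i s t) * f j t)
      = ∑ s, ∑ i, ∑ t, star (e j s) * (Y i * V i s t * f j t) := by
        refine Finset.sum_congr rfl fun s _ => ?_
        simp only [Finset.sum_mul, Finset.mul_sum]
        rw [Finset.sum_comm]
    _ = ∑ i, ∑ s, ∑ t, star (e j s) * (Y i * V i s t * f j t) := Finset.sum_comm
    _ = ∑ i, Y i * (∑ s, ∑ t, star (e j s) * (V i s t * f j t)) := by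
        refine Finset.sum_congr rfl fun i _ => ?_
        simp only [Finset.mul_sum]
        exact Finset.sum_congr rfl fun u _ => Finset.sum_congr rfl fun t _ => by ring

lemma rankone_pi {m : ℕ} {g h : Fin m → Fin m → ℂ} (hg : ONB g) (hh : ONB h) :
    (∀ i, IsPartialIso (vecMulVec (g i) (star (h i)))) ∧
    (∑ i, vecMulVec (g i) (star (h i)) * (vecMulVec (g i) (star (h i)))ᴴ) = 1 ∧
    (∑ i, (vecMulVec (g i) (star (h i)))ᴴ * vecMulVec (g i) (star (h i))) = 1 := by
  have hQQ : ∀ i, vecMulVec (g i) (star (h i)) * (vecMulVec (g i) (star (h i)))ᴴ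
      = vecMulVec (g i) (star (g i)) := by
    intro i
    rw [vecMulVec_conjT, vecMulVec_mul_vecMulVec]
    have : star (h i) ⬝ᵥ h i = 1 := by simpa using hh.dot i i
    rw [this, one_smul]
  have hQQ' : ∀ i, (vecMulVec (g i) (star (h i)))ᴴ * vecMulVec (g i) (star (h i))
      = vecMulVec (h i) (star (h i)) := by
    intro i
    rw [vecMulVec_conjT, vecMulVec_mul_vecMulVec]
    have : star (g i) ⬝ᵥ g i = 1 := by simpa using hg.dot i i
    rw [this, one_smul]
  refine ⟨fun i => ?_, ?_, ?_⟩
  · show _ = _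
    rw [hQQ i, vecMulVec_mul_vecMulVec]
    have : star (g i) ⬝ᵥ g i = 1 := by simpa using hg.dot i i
    rw [this, one_smul]
  · rw [Finset.sum_congr rfl fun i _ => hQQ i]
    ext a b
    simp only [Matrix.sum_apply, vecMulVec_apply, Pi.star_apply, Matrix.one_apply]
    exact hg.complete a b
  · rw [Finset.sum_congr rfl fun i _ => hQQ' i]
    ext a b
    simp only [Matrix.sum_apply, vecMulVec_apply, Pi.star_apply, Matrix.one_apply]
    exact hh.complete a b

lemma forward_dir {n k : ℕ} {U : Matrix (Fin n × Fin k) (Fin n × Fin k) ℂ}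
    (hA : memUA U) (hB : memUB U) :
    ∃ (lam : Fin n → Fin k → ℂ)
      (Q : Fin n → Matrix (Fin n) (Fin n) ℂ) (R : Fin k → Matrix (Fin k) (Fin k) ℂ),
      (∀ i j, ‖lam i j‖ = 1) ∧
      (∀ i, IsPartialIso (Q i)) ∧ (∀ j, IsPartialIso (R j)) ∧
      (∑ i, Q i * (Q i)ᴴ) = 1 ∧ (∑ i, (Q i)ᴴ * Q i) = 1 ∧
      (∑ j, R j * (R j)ᴴ) = 1 ∧ (∑ j, (R j)ᴴ * R j) = 1 ∧
      U = ∑ i, ∑ j, lam i j • (Q i ⊗ₖ R j) := by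
  obtain ⟨Us, e, f, hUs, he, hf, hUeq⟩ := hA
  obtain ⟨Vs, g, h, hVs, hg, hh, hVeq⟩ := hB
  set c : Fin n → Fin k → ℂ := fun i j => ∑ s, ∑ t, star (e j s) * (Vs i s t * f j t)
    with hcdef
  -- Claim 1 : Us j = ∑ i, c i j • vecMulVec (g i) (star (h i))
  have claim1 : ∀ j, Us j = ∑ i, c i j • vecMulVec (g i) (star (h i)) := by
    intro j
    ext a b
    have hDA : ∑ s, ∑ t, star (e j s) * (U (a,s) (b,t) * f j t) = Us j a b := by
      have hent : ∀ s t, U (a,s) (b,t) = ∑ j', Us j' a b * (e j' s * star (f j' t)) := by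
        intro s t
        rw [hUeq]
        simp [Matrix.sum_apply, Matrix.kroneckerMap_apply, Matrix.vecMulVec_apply]
      calc ∑ s, ∑ t, star (e j s) * (U (a,s) (b,t) * f j t)
          = ∑ s, ∑ t, star (e j s) * ((∑ j', Us j' a b * (e j' s * star (f j' t))) * f j t) := by
            refine Finset.sum_congr rfl fun s _ => Finset.sum_congr rfl fun t _ => ?_
            rw [hent s t]
        _ = Us j a b := collapse he hf (fun j' => Us j' a b) j
    have hDB : ∑ s, ∑ t, star (e j s) * (U (a,s) (b,t) * f j t)
        = ∑ i, (g i a * star (h i b)) * c i j := by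
      have hent : ∀ s t, U (a,s) (b,t) = ∑ i, (g i a * star (h i b)) * Vs i s t := by
        intro s t
        rw [hVeq]
        simp [Matrix.sum_apply, Matrix.kroneckerMap_apply, Matrix.vecMulVec_apply]
      calc ∑ s, ∑ t, star (e j s) * (U (a,s) (b,t) * f j t)
          = ∑ s, ∑ t, star (e j s) * ((∑ i, (g i a * star (h i b)) * Vs i s t) * f j t) := by
            refine Finset.sum_congr rfl fun s _ => Finset.sum_congr rfl fun t _ => ?_
            rw [hent s t]
        _ = ∑ i, (g i a * star (h i b)) * c i j :=
            collapse2 e f Vs (fun i => g i a * star (h i b)) j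
    rw [← hDA, hDB]
    simp only [Matrix.sum_apply, Matrix.smul_apply, vecMulVec_apply, Pi.star_apply,
      smul_eq_mul]
    exact Finset.sum_congr rfl fun i _ => by ring
  -- Claim 2 : ‖c i j‖ = 1
  have claim2 : ∀ i j, ‖c i j‖ = 1 := by
    intro i j
    have hy : (Us j)ᴴ *ᵥ g i = fun a => star (c i j) * h i a := by
      ext a
      have : ((Us j)ᴴ *ᵥ g i) a = ∑ b, star (Us j b a) * g i b := by
        simp [Matrix.mulVec, dotProduct, Matrix.conjTranspose_apply]
      rw [this]
      calc ∑ b, star (Us j b a) * g i b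
          = ∑ b, ∑ i', star (c i' j) * (star (g i' b) * h i' a) * g i b := by
            refine Finset.sum_congr rfl fun b _ => ?_
            rw [claim1 j]
            simp only [Matrix.sum_apply, Matrix.smul_apply, vecMulVec_apply, Pi.star_apply,
              smul_eq_mul, star_sum, star_mul', star_star, Finset.sum_mul]
        _ = ∑ i', star (c i' j) * h i' a * (∑ b, star (g i' b) * g i b) := by
            rw [Finset.sum_comm]
            refine Finset.sum_congr rfl fun i' _ => ?_
            simp only [Finset.mul_sum]
            exact Finset.sum_congr rfl fun b _ => by ring
        _ = ∑ i', star (c i' j) * h i' a * (if i' = i then (1:ℂ) else 0) := by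
            refine Finset.sum_congr rfl fun i' _ => by rw [hg i' i]
        _ = star (c i j) * h i a := by
            rw [Finset.sum_eq_single i]
            · simp
            · intro b _ hbi; simp [hbi]
            · intro habs; exact absurd (Finset.mem_univ i) habs
    have key : c i j * star (c i j) = 1 := by
      have h1 : star ((Us j)ᴴ *ᵥ g i) ⬝ᵥ ((Us j)ᴴ *ᵥ g i) = (1:ℂ) := by
        rw [Matrix.star_mulVec, Matrix.conjTranspose_conjTranspose,
          ← Matrix.dotProduct_mulVec, Matrix.mulVec_mulVec,
          (hUs j).1, Matrix.one_mulVec]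
        simpa using hg.dot i i
      rw [hy] at h1
      have h2 : star (fun a => star (c i j) * h i a) ⬝ᵥ (fun a => star (c i j) * h i a)
          = c i j * star (c i j) * (∑ a, star (h i a) * h i a) := by
        simp only [dotProduct, Pi.star_apply, star_mul', star_star, Finset.mul_sum]
        exact Finset.sum_congr rfl fun a _ => by ring
      rw [h2] at h1
      have h3 : (∑ a, star (h i a) * h i a) = 1 := by simpa using hh i i
      rw [h3, mul_one] at h1
      exact h1
    have : (Complex.normSq (c i j) : ℂ) = 1 := by
      rw [← key, mul_comm]
      simp [Complex.normSq_eq_conj_mul_self]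
    have hns : Complex.normSq (c i j) = 1 := by exact_mod_cast this
    have h4 : ‖c i j‖ ^ 2 = 1 := by
      rw [← Complex.normSq_eq_norm_sq]
      exact hns
    nlinarith [norm_nonneg (c i j)]
  obtain ⟨hQpi, hQ1, hQ2⟩ := rankone_pi hg hh
  obtain ⟨hRpi, hR1, hR2⟩ := rankone_pi he hf
  refine ⟨c, fun i => vecMulVec (g i) (star (h i)), fun j => vecMulVec (e j) (star (f j)),
    claim2, hQpi, hRpi, hQ1, hQ2, hR1, hR2, ?_⟩
  calc U = ∑ j, Us j ⊗ₖ vecMulVec (e j) (star (f j)) := hUeq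
    _ = ∑ j, ∑ i, c i j • (vecMulVec (g i) (star (h i)) ⊗ₖ vecMulVec (e j) (star (f j))) := by
        refine Finset.sum_congr rfl fun j _ => ?_
        rw [claim1 j, sum_kronecker_left]
        exact Finset.sum_congr rfl fun i _ => Matrix.smul_kronecker _ _ _
    _ = ∑ i, ∑ j, c i j • (vecMulVec (g i) (star (h i)) ⊗ₖ vecMulVec (e j) (star (f j))) :=
        Finset.sum_comm


/-- a bipartite unitary is block-diagonal with respect to both tensor
factors iff `U = ∑_{i,j} λ_{ij} Q_i ⊗ R_j` with unimodular `λ_{ij}` and families of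
partial isometries summing to the identity on each side. -/
theorem stmt16 (n k : ℕ)
    (U : Matrix (Fin n × Fin k) (Fin n × Fin k) ℂ) (hU : IsUnitary U) :
    (memUA U ∧ memUB U) ↔
      ∃ (s r : ℕ) (lam : Fin s → Fin r → ℂ)
        (Q : Fin s → Matrix (Fin n) (Fin n) ℂ)
        (R : Fin r → Matrix (Fin k) (Fin k) ℂ),
        (∀ i j, ‖lam i j‖ = 1) ∧
        (∀ i, IsPartialIso (Q i)) ∧ (∀ j, IsPartialIso (R j)) ∧
        (∑ i, Q i * (Q i)ᴴ) = 1 ∧ (∑ i, (Q i)ᴴ * Q i) = 1 ∧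
        (∑ j, R j * (R j)ᴴ) = 1 ∧ (∑ j, (R j)ᴴ * R j) = 1 ∧
        U = ∑ i, ∑ j, lam i j • (Q i ⊗ₖ R j) := by
  constructor
  · rintro ⟨hA, hB⟩
    obtain ⟨lam, Q, R, h1, h2, h3, h4, h5, h6, h7, h8⟩ := forward_dir hA hB
    exact ⟨n, k, lam, Q, R, h1, h2, h3, h4, h5, h6, h7, h8⟩
  · rintro ⟨s, r, lam, Q, R, hlam, hQ, hR, hQ1, hQ2, hR1, hR2, hUeq⟩
    rw [hUeq]
    exact reverse_dir lam Q R hlam hQ hR hQ1 hQ2 hR1 hR2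

end BipartiteUnitary
end
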